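/- Let k be a multiple of 3 with k ≥ 6. Then every coloring χ : {1,…,3k−3} → ℤ/3ℤ admits a 3-zero-sum solution to the equation E, and there exists a coloring χ : {1,…,3k−4} → ℤ/3ℤ that admits no 3-zero-sum solution to E; equivalently, S_z(k,3) = 3k − 3. -/

import Mathlib

/-- `hasZeroSumSolution k r N χ` says the coloring `χ` of `{1,…,N}` by `ZMod r`
admits an `r`-zero-sum solution to `x₁ + ⋯ + x_{k-1} = x_k`. -/
def hasZeroSumSolution (k r N : ℕ) (χ : ℕ → ZMod r) : Prop :=
  ∃ (x : Fin (k - 1) → ℕ) (y : ℕ),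
    (∀ i, 1 ≤ x i ∧ x i ≤ N) ∧ (1 ≤ y ∧ y ≤ N) ∧
    (∑ i, x i) = y ∧
    (∑ i, χ (x i)) + χ y = 0

lemma sum_fin_get {M : Type*} [AddCommMonoid M] (L : List ℕ) (f : ℕ → M) :
    ∑ i : Fin L.length, f (L.get i) = (L.map f).sum := by
  induction L with
  | nil => simp
  | cons a t ih =>
    rw [List.map_cons, List.sum_cons, ← ih]
    exact Fin.sum_univ_succ (fun i : Fin (t.length+1) => f ((a :: t).get i))

lemma template_constraint {k N : ℕ} {χ : ℕ → ZMod 3}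
    (h : ¬ hasZeroSumSolution k 3 N χ) (L : List ℕ)
    (hlen : L.length = k - 1) (hmem : ∀ z ∈ L, 1 ≤ z ∧ z ≤ N)
    (hy1 : 1 ≤ L.sum) (hy2 : L.sum ≤ N) :
    (L.map χ).sum + χ L.sum ≠ 0 := by
  intro h0
  apply h
  refine ⟨fun i => L.get (finCongr hlen.symm i), L.sum, ?_, ⟨hy1, hy2⟩, ?_, ?_⟩
  · intro i; exact hmem _ (L.get_mem _)
  · rw [Fintype.sum_equiv (finCongr hlen.symm) _ (fun j => L.get j) (fun i => rfl)]
    simpa using sum_fin_get L id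
  · rw [Fintype.sum_equiv (finCongr hlen.symm) _ (fun j => χ (L.get j)) (fun i => rfl),
      sum_fin_get L χ, h0]

lemma resid (m r : ℕ) (hm : m % 3 = r) (v : ZMod 3) : m • v = r • v := by
  rw [nsmul_eq_mul, nsmul_eq_mul, ← hm, ← ZMod.natCast_mod m 3]

lemma upper_bound (k : ℕ) (hdvd : 3 ∣ k) (hk : 6 ≤ k) (χ : ℕ → ZMod 3) :
    hasZeroSumSolution k 3 (3 * k - 3) χ := by
  by_contra h
  -- T1 : {1^(k-2), 2}, y = k
  have e1 : (2 :: List.replicate (k-2) 1).sum = k := by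
    simp [List.sum_replicate]; omega
  have T1 := template_constraint h (2 :: List.replicate (k-2) 1)
    (by simp; try omega)
    (by intro z hz; simp [List.mem_replicate] at hz; omega)
    (by rw [e1]; omega) (by rw [e1]; try omega)
  rw [e1] at T1
  simp only [List.map_cons, List.map_replicate, List.sum_cons, List.sum_replicate] at T1
  rw [resid (k-2) 1 (by omega), one_smul] at T1
  -- T2 : {1^(k-3), k, k}, y = 3k-3
  have e2 : (k :: k :: List.replicate (k-3) 1).sum = 3*k-3 := by
    simp [List.sum_replicate]; omega
  have T2 := template_constraint h (k :: k :: List.replicate (k-3) 1)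
    (by simp; try omega)
    (by intro z hz; simp [List.mem_replicate] at hz; omega)
    (by rw [e2]; omega) (by rw [e2]; try omega)
  rw [e2] at T2
  simp only [List.map_cons, List.map_replicate, List.sum_cons, List.sum_replicate] at T2
  rw [resid (k-3) 0 (by omega), zero_smul, add_zero] at T2
  -- T3 : {1^(k-4), 2, k-1, k}, y = 3k-3
  have e3 : (2 :: (k-1) :: k :: List.replicate (k-4) 1).sum = 3*k-3 := by
    simp [List.sum_replicate]; omega
  have T3 := template_constraint h (2 :: (k-1) :: k :: List.replicate (k-4) 1)
    (by simp; try omega)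
    (by intro z hz; simp [List.mem_replicate] at hz; omega)
    (by rw [e3]; omega) (by rw [e3]; try omega)
  rw [e3] at T3
  simp only [List.map_cons, List.map_replicate, List.sum_cons, List.sum_replicate] at T3
  rw [resid (k-4) 2 (by omega), two_smul] at T3
  -- T4 : {1^(k-5), 2, 2, k-1, k-1}, y = 3k-3
  have e4 : (2 :: 2 :: (k-1) :: (k-1) :: List.replicate (k-5) 1).sum = 3*k-3 := by
    simp [List.sum_replicate]; omega
  have T4 := template_constraint h (2 :: 2 :: (k-1) :: (k-1) :: List.replicate (k-5) 1)
    (by simp; try omega)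
    (by intro z hz; simp [List.mem_replicate] at hz; omega)
    (by rw [e4]; omega) (by rw [e4]; try omega)
  rw [e4] at T4
  simp only [List.map_cons, List.map_replicate, List.sum_cons, List.sum_replicate] at T4
  rw [resid (k-5) 1 (by omega), one_smul] at T4
  -- T5 : {1, 2, 4, 4, 4, 3^(k-6)}, y = 3k-3
  have e5 : (1 :: 2 :: 4 :: 4 :: 4 :: List.replicate (k-6) 3).sum = 3*k-3 := by
    simp [List.sum_replicate]; omega
  have T5 := template_constraint h (1 :: 2 :: 4 :: 4 :: 4 :: List.replicate (k-6) 3)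
    (by simp; try omega)
    (by intro z hz; simp [List.mem_replicate] at hz; omega)
    (by rw [e5]; omega) (by rw [e5]; try omega)
  rw [e5] at T5
  simp only [List.map_cons, List.map_replicate, List.sum_cons, List.sum_replicate] at T5
  rw [resid (k-6) 0 (by omega), zero_smul, add_zero] at T5
  -- T6 : {1, 3, 3, 3, k-1, 2^(k-6)}, y = 3k-3
  have e6 : (1 :: 3 :: 3 :: 3 :: (k-1) :: List.replicate (k-6) 2).sum = 3*k-3 := by
    simp [List.sum_replicate]; omega
  have T6 := template_constraint h (1 :: 3 :: 3 :: 3 :: (k-1) :: List.replicate (k-6) 2)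
    (by simp; try omega)
    (by intro z hz; simp [List.mem_replicate] at hz; omega)
    (by rw [e6]; omega) (by rw [e6]; try omega)
  rw [e6] at T6
  simp only [List.map_cons, List.map_replicate, List.sum_cons, List.sum_replicate] at T6
  rw [resid (k-6) 0 (by omega), zero_smul, add_zero] at T6
  -- now a finite check
  generalize χ 1 = a at T1 T3 T4 T5 T6
  generalize χ 2 = b at T1 T3 T4 T5
  generalize χ 3 = c3 at T5 T6
  generalize χ 4 = c4 at T5
  generalize χ (k-1) = c at T3 T4 T6
  generalize χ k = d at T1 T2 T3
  generalize χ (3*k-3) = e at T2 T3 T4 T5 T6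
  revert T1 T2 T3 T4 T5 T6
  revert a b c3 c4 c d e
  decide

def lowerColoring (k : ℕ) : ℕ → ZMod 3 := fun i =>
  if i ≤ k - 1 then ((2*i+2 : ℕ) : ZMod 3)
  else if i ≤ 2*k-2 then ((if i % 3 = 1 then 1 else 0 : ℕ) : ZMod 3)
  else ((i : ℕ) : ZMod 3)

lemma sum_blockA {n k : ℕ} (T : Finset (Fin n)) (x : Fin n → ℕ)
    (hx : ∀ i ∈ T, x i ≤ k - 1) :
    ∑ i ∈ T, lowerColoring k (x i) = ((2 * (∑ i ∈ T, x i) + 2 * T.card : ℕ) : ZMod 3) := by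
  have h1 : ∑ i ∈ T, lowerColoring k (x i) = ((∑ i ∈ T, (2 * x i + 2) : ℕ) : ZMod 3) := by
    rw [Nat.cast_sum]
    exact Finset.sum_congr rfl (fun i hi => by
      unfold lowerColoring; rw [if_pos (hx i hi)])
  rw [h1]
  congr 1
  rw [Finset.sum_add_distrib, Finset.sum_const, ← Finset.mul_sum, smul_eq_mul, mul_comm T.card 2]

lemma lower_bound (k : ℕ) (hdvd : 3 ∣ k) (hk : 6 ≤ k) :
    ¬ hasZeroSumSolution k 3 (3 * k - 4) (lowerColoring k) := by
  rintro ⟨x, y, hx, hy, hsum, hchi⟩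
  have hcard : (Finset.univ : Finset (Fin (k-1))).card = k - 1 := by simp
  have hylb : k - 1 ≤ y := by
    have h := Finset.card_nsmul_le_sum Finset.univ x 1 (fun i _ => (hx i).1)
    rw [hsum, smul_eq_mul, mul_one, hcard] at h
    exact h
  by_cases hall : ∀ i, x i ≤ k - 1
  · have hsA := sum_blockA Finset.univ x (fun i _ => hall i)
    rw [hsA] at hchi
    rcases le_or_gt y (k-1) with h1 | h1
    · have hy_eq : y = k-1 := le_antisymm h1 hylb
      have hχy : lowerColoring k y = ((2*y+2 : ℕ) : ZMod 3) := by
        unfold lowerColoring; rw [if_pos h1]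
      rw [hχy, ← Nat.cast_add, ZMod.natCast_eq_zero_iff] at hchi
      omega
    · rcases le_or_gt y (2*k-2) with h2 | h2
      · have hχy : lowerColoring k y = ((if y % 3 = 1 then 1 else 0 : ℕ) : ZMod 3) := by
          unfold lowerColoring; rw [if_neg (by omega), if_pos h2]
        rw [hχy, ← Nat.cast_add, ZMod.natCast_eq_zero_iff] at hchi
        by_cases hy3 : y % 3 = 1 <;> simp [hy3] at hchi <;> omega
      · have hχy : lowerColoring k y = ((y : ℕ) : ZMod 3) := by
          unfold lowerColoring; rw [if_neg (by omega), if_neg (by omega)]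
        rw [hχy, ← Nat.cast_add, ZMod.natCast_eq_zero_iff] at hchi
        omega
  · push_neg at hall
    obtain ⟨j, hj⟩ := hall
    have hxj : k ≤ x j := by omega
    set T := Finset.univ.erase j with hT
    have hTcard : T.card = k - 2 := by
      rw [hT, Finset.card_erase_of_mem (Finset.mem_univ j), hcard]
      omega
    have hsplit : x j + ∑ i ∈ T, x i = y := by
      rw [hT, Finset.add_sum_erase _ x (Finset.mem_univ j), hsum]
    have hS_lb : T.card ≤ ∑ i ∈ T, x i := by
      have h := Finset.card_nsmul_le_sum T x 1 (fun m _ => (hx m).1)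
      rwa [smul_eq_mul, mul_one] at h
    have hTbound : ∀ i ∈ T, x i ≤ k - 1 := by
      intro i hi
      by_contra hxi
      have h2 : x i + ∑ m ∈ T.erase i, x m = ∑ i ∈ T, x i :=
        Finset.add_sum_erase T x hi
      have h3 : (T.erase i).card ≤ ∑ m ∈ T.erase i, x m := by
        have h := Finset.card_nsmul_le_sum (T.erase i) x 1 (fun m _ => (hx m).1)
        rwa [smul_eq_mul, mul_one] at h
      have hcardTi : (T.erase i).card = k - 3 := by
        rw [Finset.card_erase_of_mem hi, hTcard]
        omega
      have hyub := hy.2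
      omega
    have hsA := sum_blockA T x hTbound
    have hchi2 : lowerColoring k (x j) + ∑ i ∈ T, lowerColoring k (x i)
        + lowerColoring k y = 0 := by
      rw [hT, Finset.add_sum_erase _ (fun i => lowerColoring k (x i)) (Finset.mem_univ j)]
      exact hchi
    have hxj_ub : x j ≤ 2*k - 2 := by omega
    have hχxj : lowerColoring k (x j) = ((if x j % 3 = 1 then 1 else 0 : ℕ) : ZMod 3) := by
      unfold lowerColoring; rw [if_neg (by omega), if_pos hxj_ub]
    rw [hχxj, hsA] at hchi2
    rcases le_or_gt y (2*k-2) with h2 | h2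
    · have hy_eq : y = 2*k-2 := by omega
      have hxj_eq : x j = k := by omega
      have hχy : lowerColoring k y = ((if y % 3 = 1 then 1 else 0 : ℕ) : ZMod 3) := by
        unfold lowerColoring; rw [if_neg (by omega), if_pos h2]
      rw [hχy, if_neg (by omega), if_pos (by omega), ← Nat.cast_add, ← Nat.cast_add,
        ZMod.natCast_eq_zero_iff] at hchi2
      omega
    · have hχy : lowerColoring k y = ((y : ℕ) : ZMod 3) := by
        unfold lowerColoring; rw [if_neg (by omega), if_neg (by omega)]
      rw [hχy] at hchi2
      by_cases hb : x j % 3 = 1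
      · rw [if_pos hb, ← Nat.cast_add, ← Nat.cast_add,
          ZMod.natCast_eq_zero_iff] at hchi2
        omega
      · rw [if_neg hb, ← Nat.cast_add, ← Nat.cast_add,
          ZMod.natCast_eq_zero_iff] at hchi2
        omega


theorem zero_sum_schur_eq_three (k : ℕ) (hdvd : 3 ∣ k) (hk : 6 ≤ k) :
    (∀ χ : ℕ → ZMod 3, hasZeroSumSolution k 3 (3 * k - 3) χ) ∧
    (∃ χ : ℕ → ZMod 3, ¬ hasZeroSumSolution k 3 (3 * k - 4) χ) :=
  ⟨fun χ => upper_bound k hdvd hk χ, ⟨lowerColoring k, lower_bound k hdvd hk⟩⟩
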